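/- Let k be a field, m ≥ 2 and d ≥ 2 integers, and a = (a_1, …, a_{m−1}) ∈ k^{m−1}. For every i ∈ {1, …, m−1}, the elimination ideal ⟨g_1, …, g_{m−1}⟩ ∩ k[x_i, …, x_m] equals the ideal generated by g_i, …, g_{m−1} inside the subring k[x_i, …, x_m]; that is, every polynomial of ⟨g_1, …, g_{m−1}⟩ ⊆ k[x_1, …, x_m] depending only on the variables x_i, …, x_m is a k[x_i, …, x_m]-linear combination of g_i, …, g_{m−1}. -/

import Mathlib

open scoped BigOperators

/-- The polynomial `g_j = x_j^d − x_{j+1}^d − a_j` (0-indexed). -/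
noncomputable def gPoly {k : Type*} [CommRing k] (m d : ℕ) (a : Fin (m - 1) → k)
    (j : Fin (m - 1)) : MvPolynomial (Fin m) k :=
  MvPolynomial.X ⟨j.1, by have := j.isLt; omega⟩ ^ d -
    MvPolynomial.X ⟨j.1 + 1, by have := j.isLt; omega⟩ ^ d -
    MvPolynomial.C (a j)

/-- The partial sum `A_i = ∑_{k ≥ i} a_k`. -/
def partialSum {k : Type*} [AddCommMonoid k] {n : ℕ} (a : Fin n → k) (i : Fin n) : k :=
  ∑ t ∈ Finset.Ici i, a t

section Aux

variable {k : Type*} [Field k]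

lemma gPoly_mem_supported (m d : ℕ) (a : Fin (m - 1) → k) (j : Fin (m - 1))
    (s : Set (Fin m)) (h1 : (⟨j.1, by have := j.isLt; omega⟩ : Fin m) ∈ s)
    (h2 : (⟨j.1 + 1, by have := j.isLt; omega⟩ : Fin m) ∈ s) :
    gPoly m d a j ∈ MvPolynomial.supported k s := by
  refine sub_mem (sub_mem (pow_mem (MvPolynomial.X_mem_supported.mpr h1) d)
    (pow_mem (MvPolynomial.X_mem_supported.mpr h2) d)) ?_
  rw [← MvPolynomial.algebraMap_eq]
  exact Subalgebra.algebraMap_mem _ _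

lemma step (m d : ℕ) (hm : 2 ≤ m) (hd : 2 ≤ d) (a : Fin (m - 1) → k)
    (i : ℕ) (hi : i < m - 1) (p : MvPolynomial (Fin m) k)
    (hp : p ∈ MvPolynomial.supported k {v : Fin m | v.1 ≠ i})
    (c : Fin (m - 1) → MvPolynomial (Fin m) k)
    (h : p = ∑ j ∈ Finset.univ.filter (fun j : Fin (m - 1) => i ≤ j.1),
        c j * gPoly m d a j) :
    ∃ c' : Fin (m - 1) → MvPolynomial (Fin m) k,
      p = ∑ j ∈ Finset.univ.filter (fun j : Fin (m - 1) => i + 1 ≤ j.1),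
        c' j * gPoly m d a j := by
  classical
  have him : i < m := by omega
  set i0 : Fin m := ⟨i, him⟩ with hi0
  set E := (MvPolynomial.renameEquiv k (Equiv.optionSubtypeNe i0).symm).trans
      (MvPolynomial.optionEquivLeft k {v : Fin m // v ≠ i0}) with hE
  have hX0 : E (MvPolynomial.X i0) = Polynomial.X := by
    simp [hE, MvPolynomial.renameEquiv_apply, Equiv.optionSubtypeNe_symm_self,
      MvPolynomial.optionEquivLeft_X_none]
  have hXv : ∀ (v : Fin m) (hv : v ≠ i0),
      E (MvPolynomial.X v) = Polynomial.C (MvPolynomial.X ⟨v, hv⟩) := by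
    intro v hv
    simp [hE, MvPolynomial.renameEquiv_apply, Equiv.optionSubtypeNe_symm_of_ne hv,
      MvPolynomial.optionEquivLeft_X_some]
  -- the subalgebra of constant polynomials
  let T : Subalgebra k (Polynomial (MvPolynomial {v : Fin m // v ≠ i0} k)) :=
    { carrier := Set.range Polynomial.C
      mul_mem' := by rintro _ _ ⟨x, rfl⟩ ⟨y, rfl⟩; exact ⟨x * y, map_mul _ _ _⟩
      add_mem' := by rintro _ _ ⟨x, rfl⟩ ⟨y, rfl⟩; exact ⟨x + y, map_add _ _ _⟩
      one_mem' := ⟨1, map_one _⟩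
      zero_mem' := ⟨0, map_zero _⟩
      algebraMap_mem' := fun r => ⟨algebraMap k _ r, (Polynomial.algebraMap_apply r).symm⟩ }
  have hsupp : ∀ q ∈ MvPolynomial.supported k {v : Fin m | v.1 ≠ i},
      ∃ t, E q = Polynomial.C t := by
    intro q hq
    have hle : MvPolynomial.supported k {v : Fin m | v.1 ≠ i} ≤
        Subalgebra.comap E.toAlgHom T := by
      rw [MvPolynomial.supported]
      apply Algebra.adjoin_le
      rintro _ ⟨v, hv, rfl⟩
      have hv' : v ≠ i0 := fun hh => hv (by rw [hh])
      exact ⟨MvPolynomial.X ⟨v, hv'⟩, (hXv v hv').symm⟩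
    obtain ⟨t, ht⟩ := hle hq
    exact ⟨t, ht.symm⟩
  obtain ⟨p0, hEp⟩ := hsupp p hp
  have hi1m : i + 1 < m := by omega
  set ι : Fin (m - 1) := ⟨i, hi⟩ with hι
  have hne1 : (⟨i + 1, hi1m⟩ : Fin m) ≠ i0 := by simp [hi0, Fin.ext_iff]
  set G : Polynomial (MvPolynomial {v : Fin m // v ≠ i0} k) :=
    Polynomial.X ^ d - Polynomial.C
      (MvPolynomial.X (⟨⟨i + 1, hi1m⟩, hne1⟩ : {v : Fin m // v ≠ i0}) ^ d +
        MvPolynomial.C (a ι)) with hG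
  have hEgι : E (gPoly m d a ι) = G := by
    have hgι : gPoly m d a ι =
        MvPolynomial.X i0 ^ d - MvPolynomial.X ⟨i + 1, hi1m⟩ ^ d -
          MvPolynomial.C (a ι) := rfl
    have hEC : E (MvPolynomial.C (a ι)) = Polynomial.C (MvPolynomial.C (a ι)) := by
      simp [hE, MvPolynomial.optionEquivLeft_C]
    rw [hgι, map_sub, map_sub, map_pow, map_pow, hX0, hXv _ hne1, hEC, hG, map_add, map_pow]
    ring
  have hmonic : G.Monic := Polynomial.monic_X_pow_sub_C _ (by omega)
  have hdegG : G.degree = d := Polynomial.degree_X_pow_sub_C (by omega) _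
  set F' := Finset.univ.filter (fun j : Fin (m - 1) => i + 1 ≤ j.1) with hF'
  have hιF' : ι ∉ F' := by simp [hF', hι]
  have hins : Finset.univ.filter (fun j : Fin (m - 1) => i ≤ j.1) = insert ι F' := by
    ext j
    simp only [Finset.mem_filter, Finset.mem_univ, true_and, Finset.mem_insert, hF', hι,
      Fin.ext_iff]
    omega
  have hgF' : ∀ j ∈ F', ∃ t, E (gPoly m d a j) = Polynomial.C t := by
    intro j hj
    have hj1 : i + 1 ≤ j.1 := by
      simpa only [hF', Finset.mem_filter, Finset.mem_univ, true_and] using hj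
    refine hsupp _ (gPoly_mem_supported m d a j _ ?_ ?_)
    · show j.1 ≠ i; omega
    · show j.1 + 1 ≠ i; omega
  choose t ht using hgF'
  obtain ⟨s, hsC⟩ : ∃ s : Fin (m - 1) → MvPolynomial {v : Fin m // v ≠ i0} k,
      ∀ j ∈ F', E (gPoly m d a j) = Polynomial.C (s j) :=
    ⟨fun j => if hj : j ∈ F' then t j hj else 0, fun j hj => by simp only [dif_pos hj]; exact ht j hj⟩
  have heq : Polynomial.C p0 =
      E (c ι) * G + ∑ j ∈ F', E (c j) * Polynomial.C (s j) := by
    rw [← hEp, h, hins, Finset.sum_insert hιF', map_add, map_mul, hEgι, map_sum]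
    congr 1
    exact Finset.sum_congr rfl fun j hj => by rw [map_mul, hsC j hj]
  set r : Fin (m - 1) → Polynomial (MvPolynomial {v : Fin m // v ≠ i0} k) :=
    fun j => E (c j) %ₘ G with hr
  set q : Fin (m - 1) → Polynomial (MvPolynomial {v : Fin m // v ≠ i0} k) :=
    fun j => E (c j) /ₘ G with hq
  have hmod : ∀ j, E (c j) = r j + G * q j :=
    fun j => (Polynomial.modByMonic_add_div (E (c j)) G).symm
  set Q := E (c ι) + ∑ j ∈ F', q j * Polynomial.C (s j) with hQdef
  have key : Polynomial.C p0 = Q * G + ∑ j ∈ F', r j * Polynomial.C (s j) := by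
    rw [heq]
    calc E (c ι) * G + ∑ j ∈ F', E (c j) * Polynomial.C (s j)
        = E (c ι) * G +
            ∑ j ∈ F', (q j * Polynomial.C (s j) * G + r j * Polynomial.C (s j)) := by
          congr 1
          exact Finset.sum_congr rfl fun j _ => by rw [hmod j]; ring
      _ = Q * G + ∑ j ∈ F', r j * Polynomial.C (s j) := by
          rw [Finset.sum_add_distrib, hQdef, add_mul, Finset.sum_mul]
          ring
  have hdpos : (0 : WithBot ℕ) < (d : WithBot ℕ) := by
    exact_mod_cast (by omega : (0 : ℕ) < d)
  have hQ : Q = 0 := by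
    by_contra hQ0
    have h2 : (d : WithBot ℕ) ≤ (Q * G).degree := by
      rw [Polynomial.degree_mul, hdegG]
      calc (d : WithBot ℕ) = 0 + d := (zero_add _).symm
        _ ≤ Q.degree + d := add_le_add_left (Polynomial.zero_le_degree_iff.mpr hQ0) _
    have h3 : (Q * G).degree < (d : WithBot ℕ) := by
      have hQG : Q * G = Polynomial.C p0 - ∑ j ∈ F', r j * Polynomial.C (s j) := by
        rw [key]; ring
      rw [hQG]
      apply lt_of_le_of_lt (Polynomial.degree_sub_le _ _)
      apply max_lt
      · exact lt_of_le_of_lt Polynomial.degree_C_le hdpos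
      · apply lt_of_le_of_lt (Polynomial.degree_sum_le _ _)
        rw [Finset.sup_lt_iff (lt_of_le_of_lt bot_le hdpos)]
        intro j hj
        calc (r j * Polynomial.C (s j)).degree
            ≤ (r j).degree + (Polynomial.C (s j)).degree := Polynomial.degree_mul_le _ _
          _ ≤ (r j).degree + 0 := add_le_add_right Polynomial.degree_C_le _
          _ = (r j).degree := add_zero _
          _ < G.degree := Polynomial.degree_modByMonic_lt _ hmonic
          _ = d := hdegG
    exact absurd h3 (not_lt.mpr h2)
  have hfin : Polynomial.C p0 = ∑ j ∈ F', r j * Polynomial.C (s j) := by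
    rw [key, hQ, zero_mul, zero_add]
  have hp0 : p0 = ∑ j ∈ F', (r j).eval 0 * s j := by
    have := congrArg (Polynomial.eval 0) hfin
    simpa [Polynomial.eval_finset_sum] using this
  refine ⟨fun j => E.symm (Polynomial.C ((r j).eval 0)), ?_⟩
  have h1 : p = E.symm (Polynomial.C p0) := by
    rw [← hEp, AlgEquiv.symm_apply_apply]
  rw [h1, hp0, map_sum, map_sum]
  refine Finset.sum_congr rfl fun j hj => ?_
  rw [map_mul, map_mul, ← hsC j hj, AlgEquiv.symm_apply_apply]

end Aux

open scoped Classical in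
theorem statement5 {k : Type*} [Field k] (m d : ℕ) (hm : 2 ≤ m) (hd : 2 ≤ d)
    (a : Fin (m - 1) → k) (i : ℕ) (hi : i < m - 1)
    (p : MvPolynomial (Fin m) k) :
    (p ∈ Ideal.span (Set.range (gPoly m d a)) ∧
        p ∈ MvPolynomial.supported k {v : Fin m | i ≤ v.1}) ↔
      ∃ c : Fin (m - 1) → MvPolynomial (Fin m) k,
        (∀ j, c j ∈ MvPolynomial.supported k {v : Fin m | i ≤ v.1}) ∧
        p = ∑ j ∈ Finset.univ.filter (fun j : Fin (m - 1) => i ≤ j.1),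
              c j * gPoly m d a j := by
  classical
  constructor
  · rintro ⟨hsp, hpsupp⟩
    obtain ⟨c0, hc0⟩ := (Submodule.mem_span_range_iff_exists_fun (MvPolynomial (Fin m) k)).mp (show p ∈ Submodule.span (MvPolynomial (Fin m) k) (Set.range (gPoly m d a)) from hsp)
    have key : ∀ t : ℕ, t ≤ i → ∃ c : Fin (m - 1) → MvPolynomial (Fin m) k,
        p = ∑ j ∈ Finset.univ.filter (fun j : Fin (m - 1) => t ≤ j.1),
          c j * gPoly m d a j := by
      intro t
      induction t with
      | zero =>
        intro _
        refine ⟨c0, ?_⟩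
        rw [show Finset.univ.filter (fun j : Fin (m - 1) => 0 ≤ j.1) = Finset.univ from by
          simp]
        rw [← hc0]
        exact Finset.sum_congr rfl fun j _ => (smul_eq_mul _ _).symm
      | succ t ih =>
        intro ht
        obtain ⟨c, hc⟩ := ih (by omega)
        exact step m d hm hd a t (by omega) p
          (MvPolynomial.supported_mono
            (fun v hv => by simp only [Set.mem_setOf_eq] at hv ⊢; omega) hpsupp) c hc
    obtain ⟨c, hc⟩ := key i le_rfl
    set κ : MvPolynomial (Fin m) k →ₐ[k] MvPolynomial (Fin m) k :=
      MvPolynomial.aeval (fun v : Fin m => if i ≤ v.1 then MvPolynomial.X v else 0) with hκ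
    have hκmem : ∀ q, κ q ∈ MvPolynomial.supported k {v : Fin m | i ≤ v.1} := by
      intro q
      induction q using MvPolynomial.induction_on with
      | C r =>
        rw [hκ]
        simp only [MvPolynomial.aeval_C]
        exact Subalgebra.algebraMap_mem _ _
      | add f g hf hg => rw [map_add]; exact add_mem hf hg
      | mul_X f v hf =>
        rw [map_mul]
        refine mul_mem hf ?_
        rw [hκ]
        simp only [MvPolynomial.aeval_X]
        split_ifs with hv
        · exact MvPolynomial.X_mem_supported.mpr hv
        · exact zero_mem _
    have hκid : ∀ q ∈ MvPolynomial.supported k {v : Fin m | i ≤ v.1}, κ q = q := by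
      intro q hq
      rw [MvPolynomial.supported] at hq
      induction hq using Algebra.adjoin_induction with
      | mem x hx =>
        obtain ⟨v, hv, rfl⟩ := hx
        rw [hκ]
        simp only [MvPolynomial.aeval_X]
        rw [if_pos (show i ≤ v.1 from hv)]
      | algebraMap r => exact κ.commutes r
      | add x y hx hy hx' hy' => rw [map_add, hx', hy']
      | mul x y hx hy hx' hy' => rw [map_mul, hx', hy']
    refine ⟨fun j => κ (c j), fun j => hκmem _, ?_⟩
    calc p = κ p := (hκid p hpsupp).symm
      _ = κ (∑ j ∈ Finset.univ.filter (fun j : Fin (m - 1) => i ≤ j.1),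
            c j * gPoly m d a j) := by rw [← hc]
      _ = ∑ j ∈ Finset.univ.filter (fun j : Fin (m - 1) => i ≤ j.1),
            κ (c j) * gPoly m d a j := by
          rw [map_sum]
          refine Finset.sum_congr rfl fun j hj => ?_
          have hji : i ≤ j.1 := (Finset.mem_filter.mp hj).2
          rw [map_mul, hκid (gPoly m d a j)
            (gPoly_mem_supported m d a j _ (by exact hji) (by show i ≤ j.1 + 1; omega))]
  · rintro ⟨c, hcsupp, rfl⟩
    constructor
    · exact Ideal.sum_mem _ fun j hj =>
        Ideal.mul_mem_left _ _ (Ideal.subset_span ⟨j, rfl⟩)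
    · refine Subalgebra.sum_mem _ fun j hj => Subalgebra.mul_mem _ (hcsupp j) ?_
      have hji : i ≤ j.1 := (Finset.mem_filter.mp hj).2
      exact gPoly_mem_supported m d a j _ (by exact hji) (by show i ≤ j.1 + 1; omega)
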